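/- Let G be a group, d ≥ 1, and let D : G → Matrix (Fin d) (Fin d) ℂ with each D g unitary and ω : G → G → ℂˣ such that D g * D h = (ω g h : ℂ) • D (g*h) for all g, h. Let N ≥ 1, A : Fin d → Matrix (Fin N) (Fin N) ℂ, and V : G → Matrix (Fin N) (Fin N) ℂ with each V g unitary, satisfying: for all g ∈ G and all m : Fin d, ∑ n, (D g) m n • A n = (V g)ᴴ * A m * (V g). If the map Γ_I is injective for some I ≥ 1, then ω g h = 1 for all g, h ∈ G; in particular D is a genuine linear representation of G (injectivity of a symmetric translation-invariant MPS forces the on-site symmetry to be realized linearly). -/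

import Mathlib

open Matrix

/-- The MPS map `Γ_I`: given an MPS tensor `A`, length `I` and a boundary matrix `M`,
returns the coefficient function `σ ↦ trace (M * A (σ 0) * ⋯ * A (σ (I-1)))`. -/
noncomputable def GammaMPS {N : ℕ} {ι : Type*} (A : ι → Matrix (Fin N) (Fin N) ℂ)
    (I : ℕ) (M : Matrix (Fin N) (Fin N) ℂ) : (Fin I → ι) → ℂ :=
  fun σ => Matrix.trace (M * (List.ofFn fun i => A (σ i)).prod)

private lemma prod_conj_aux {N : ℕ} (U : Matrix (Fin N) (Fin N) ℂ)
    (hU : Uᴴ * U = 1) (hU' : U * Uᴴ = 1) (c : ℂ)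
    (l : List (Matrix (Fin N) (Fin N) ℂ)) (hl : ∀ B ∈ l, B = c • (U * B * Uᴴ)) :
    l.prod = c ^ l.length • (U * l.prod * Uᴴ) := by
  induction l with
  | nil => simp [hU']
  | cons B l ih =>
    have hB := hl B List.mem_cons_self
    have hrest := ih (fun B hB => hl B (List.mem_cons_of_mem _ hB))
    rw [List.prod_cons, List.length_cons]
    calc B * l.prod = (c • (U * B * Uᴴ)) * (c ^ l.length • (U * l.prod * Uᴴ)) := by
          rw [← hB, ← hrest]
    _ = c ^ (l.length + 1) • (U * (B * l.prod) * Uᴴ) := by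
        have hm : (U * B * Uᴴ) * (U * l.prod * Uᴴ) = U * (B * l.prod) * Uᴴ := by
          simp only [Matrix.mul_assoc]
          rw [← Matrix.mul_assoc Uᴴ U, hU, Matrix.one_mul]
        rw [Matrix.smul_mul, Matrix.mul_smul, smul_smul, hm, pow_succ, mul_comm]

theorem injective_MPS_forces_linear_symmetry {G : Type*} [Group G] {d : ℕ} (hd : 1 ≤ d)
    (D : G → Matrix (Fin d) (Fin d) ℂ)
    (hDunitary : ∀ g, D g ∈ Matrix.unitaryGroup (Fin d) ℂ)
    (ω : G → G → ℂˣ)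
    (hproj : ∀ g h, D g * D h = (ω g h : ℂ) • D (g * h))
    {N : ℕ} (hN : 1 ≤ N)
    (A : Fin d → Matrix (Fin N) (Fin N) ℂ)
    (V : G → Matrix (Fin N) (Fin N) ℂ)
    (hVunitary : ∀ g, V g ∈ Matrix.unitaryGroup (Fin N) ℂ)
    (hsym : ∀ (g : G) (m : Fin d), ∑ n, (D g) m n • A n = (V g)ᴴ * A m * V g)
    (I : ℕ) (hI : 1 ≤ I) (hinj : Function.Injective (GammaMPS A I)) :
    ∀ g h : G, ω g h = 1 := by
  intro g h
  set c : ℂ := (ω g h : ℂ) with hc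
  have hVs : ∀ k, (V k)ᴴ * V k = 1 ∧ V k * (V k)ᴴ = 1 := by
    intro k
    have h1 := (hVunitary k).1
    have h2 := (hVunitary k).2
    rw [Matrix.star_eq_conjTranspose] at h1 h2
    exact ⟨h1, h2⟩
  have key0 : ∀ m, (V g * V h)ᴴ * A m * (V g * V h)
      = c • ((V (g * h))ᴴ * A m * (V (g * h))) := by
    intro m
    have lhs1 : ∑ n, (D g * D h) m n • A n
        = (V g * V h)ᴴ * A m * (V g * V h) := by
      calc ∑ n, (D g * D h) m n • A n
          = ∑ n, ∑ k, D g m k • (D h k n • A n) := by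
            simp [Matrix.mul_apply, Finset.sum_smul, smul_smul]
        _ = ∑ k, D g m k • ∑ n, D h k n • A n := by
            rw [Finset.sum_comm]; simp [Finset.smul_sum]
        _ = ∑ k, D g m k • ((V h)ᴴ * A k * V h) := by simp [hsym h]
        _ = (V h)ᴴ * (∑ k, D g m k • A k) * V h := by
            rw [Finset.mul_sum, Finset.sum_mul]
            simp [Matrix.mul_smul, Matrix.smul_mul]
        _ = (V h)ᴴ * ((V g)ᴴ * A m * V g) * V h := by rw [hsym g]
        _ = (V g * V h)ᴴ * A m * (V g * V h) := by
            simp only [Matrix.conjTranspose_mul, Matrix.mul_assoc]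
    have lhs2 : ∑ n, (D g * D h) m n • A n
        = c • ((V (g * h))ᴴ * A m * (V (g * h))) := by
      rw [hproj g h, ← hsym (g * h) m, Finset.smul_sum]
      simp [Matrix.smul_apply, smul_smul]
      rfl
    rw [← lhs1, lhs2]
  set U : Matrix (Fin N) (Fin N) ℂ := (V g * V h) * (V (g * h))ᴴ with hUdef
  have hUs : Uᴴ = V (g * h) * (V g * V h)ᴴ := by
    rw [hUdef, Matrix.conjTranspose_mul, Matrix.conjTranspose_conjTranspose]
  have hU1 : Uᴴ * U = 1 := by
    rw [hUs, hUdef]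
    calc V (g * h) * (V g * V h)ᴴ * ((V g * V h) * (V (g * h))ᴴ)
        = V (g * h) * ((V g * V h)ᴴ * (V g * V h)) * (V (g * h))ᴴ := by
          simp only [Matrix.mul_assoc]
      _ = 1 := by
          rw [Matrix.conjTranspose_mul]
          rw [show (V h)ᴴ * (V g)ᴴ * (V g * V h) = (V h)ᴴ * ((V g)ᴴ * V g) * V h by
            simp only [Matrix.mul_assoc]]
          rw [(hVs g).1, Matrix.mul_one, (hVs h).1, Matrix.mul_one, (hVs (g * h)).2]
  have hU2 : U * Uᴴ = 1 := by
    rw [hUs, hUdef]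
    calc (V g * V h) * (V (g * h))ᴴ * (V (g * h) * (V g * V h)ᴴ)
        = (V g * V h) * ((V (g * h))ᴴ * V (g * h)) * (V g * V h)ᴴ := by
          simp only [Matrix.mul_assoc]
      _ = 1 := by
          rw [(hVs (g * h)).1, Matrix.mul_one, Matrix.conjTranspose_mul]
          rw [show V g * V h * ((V h)ᴴ * (V g)ᴴ) = V g * (V h * (V h)ᴴ) * (V g)ᴴ by
            simp only [Matrix.mul_assoc]]
          rw [(hVs h).2, Matrix.mul_one, (hVs g).2]
  have key : ∀ m, A m = c • (U * A m * Uᴴ) := by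
    intro m
    have hkm := key0 m
    have hW : V g * V h * (V g * V h)ᴴ = 1 := by
      rw [Matrix.conjTranspose_mul]
      rw [show V g * V h * ((V h)ᴴ * (V g)ᴴ) = V g * (V h * (V h)ᴴ) * (V g)ᴴ by
        simp only [Matrix.mul_assoc]]
      rw [(hVs h).2, Matrix.mul_one, (hVs g).2]
    calc A m = (V g * V h) * ((V g * V h)ᴴ * A m * (V g * V h)) * (V g * V h)ᴴ := by
          rw [show (V g * V h) * ((V g * V h)ᴴ * A m * (V g * V h)) * (V g * V h)ᴴ
              = ((V g * V h) * (V g * V h)ᴴ) * A m * ((V g * V h) * (V g * V h)ᴴ) by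
            simp only [Matrix.mul_assoc]]
          rw [hW, Matrix.one_mul, Matrix.mul_one]
      _ = c • (U * A m * Uᴴ) := by
          rw [hkm, Matrix.mul_smul, Matrix.smul_mul, hUdef, hUs]
          congr 1
          simp only [Matrix.mul_assoc]
  have hprod : ∀ σ : Fin I → Fin d,
      (List.ofFn fun i => A (σ i)).prod
        = c ^ I • (U * (List.ofFn fun i => A (σ i)).prod * Uᴴ) := by
    intro σ
    have hmem : ∀ B ∈ (List.ofFn fun i => A (σ i)), B = c • (U * B * Uᴴ) := by
      intro B hB
      obtain ⟨i, rfl⟩ := List.mem_ofFn.mp hB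
      exact key (σ i)
    have := prod_conj_aux U hU1 hU2 c (List.ofFn fun i => A (σ i)) hmem
    simpa using this
  have hGamma : ∀ M, GammaMPS A I M = GammaMPS A I (c ^ I • (Uᴴ * M * U)) := by
    intro M
    funext σ
    unfold GammaMPS
    conv_lhs => rw [hprod σ]
    rw [Matrix.mul_smul, Matrix.smul_mul, Matrix.trace_smul, Matrix.trace_smul]
    congr 1
    rw [show M * (U * (List.ofFn fun i => A (σ i)).prod * Uᴴ)
        = (M * U * (List.ofFn fun i => A (σ i)).prod) * Uᴴ by
      simp only [Matrix.mul_assoc], Matrix.trace_mul_comm]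
    simp only [Matrix.mul_assoc]
  have hfix : ∀ M, c ^ I • (Uᴴ * M * U) = M := fun M => hinj (hGamma M).symm
  have hcI : c ^ I = 1 := by
    have h1 := hfix 1
    rw [Matrix.mul_one, hU1] at h1
    have h2 := congrFun (congrFun h1 ⟨0, hN⟩) ⟨0, hN⟩
    simpa using h2
  have hfix' : ∀ M, Uᴴ * M * U = M := by
    intro M
    have h1 := hfix M
    rwa [hcI, one_smul] at h1
  have hsmul : ∀ m, A m = c • A m := by
    intro m
    have h1 : Uᴴ * (U * A m * Uᴴ) * U = A m := by
      rw [show Uᴴ * (U * A m * Uᴴ) * U = (Uᴴ * U) * A m * (Uᴴ * U) by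
        simp only [Matrix.mul_assoc], hU1, Matrix.one_mul, Matrix.mul_one]
    have h2 : U * A m * Uᴴ = A m := by rw [← hfix' (U * A m * Uᴴ), h1]
    conv_lhs => rw [key m, h2]
  by_cases hAz : ∀ m, A m = 0
  · exfalso
    obtain ⟨I', rfl⟩ : ∃ I', I = I' + 1 := ⟨I - 1, by omega⟩
    have h10 : GammaMPS A (I' + 1) 1 = GammaMPS A (I' + 1) 0 := by
      funext σ
      unfold GammaMPS
      rw [List.ofFn_succ]
      simp [hAz]
    have h11 := congrFun (congrFun (hinj h10) ⟨0, hN⟩) ⟨0, hN⟩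
    simp at h11
  · push_neg at hAz
    obtain ⟨m, hm⟩ := hAz
    have hz : (c - 1) • A m = 0 := by
      rw [sub_smul, one_smul, ← hsmul m, sub_self]
    rcases smul_eq_zero.mp hz with h0 | h0
    · have hc1 : c = 1 := by linear_combination h0
      exact Units.ext (by rw [← hc, hc1, Units.val_one])
    · exact absurd h0 hm
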